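/- Let G be a topological group whose topology is induced by a left-invariant metric d (i.e., d(gx, gy) = d(x, y) for all g, x, y ∈ G) for which all closed balls are compact, and let Γ ⊆ G be a discrete subgroup. Define F = {x ∈ G : d(x,e) < d(x,γ) for all γ ∈ Γ ∖ {1}}. Then F = {x ∈ G : d(x,e) < d(x,γ) for all γ ∈ Γ ∖ {1} with d(γ,e) < 3·d(x,e)}, and F is an open subset of G. -/

import Mathlib

/-- Dirichlet domain, openness.  Let `G` be a topological group whose
topology comes from a left-invariant metric with compact closed balls, and let `Γ ≤ G`
be discrete.  With `F = {x : d(x,1) < d(x,γ) ∀ γ ∈ Γ∖{1}}`, only the `γ` with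
`d(γ,1) < 3·d(x,1)` matter, and `F` is open. -/

theorem stmt9 {G : Type*} [Group G] [MetricSpace G] [IsTopologicalGroup G] [ProperSpace G]
    (hinv : ∀ g x y : G, dist (g * x) (g * y) = dist x y)
    (Γ : Subgroup G) (hdisc : DiscreteTopology ↥Γ) :
    ({x : G | ∀ γ ∈ Γ, γ ≠ 1 → dist x 1 < dist x γ} =
      {x : G | ∀ γ ∈ Γ, γ ≠ 1 → dist γ (1 : G) < 3 * dist x 1 → dist x 1 < dist x γ}) ∧
    IsOpen {x : G | ∀ γ ∈ Γ, γ ≠ 1 → dist x 1 < dist x γ} := by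
  classical
  -- The set equality
  have heq : ({x : G | ∀ γ ∈ Γ, γ ≠ 1 → dist x 1 < dist x γ} =
      {x : G | ∀ γ ∈ Γ, γ ≠ 1 → dist γ (1 : G) < 3 * dist x 1 → dist x 1 < dist x γ}) := by
    ext x
    simp only [Set.mem_setOf_eq]
    constructor
    · intro h γ hγ hγ1 _
      exact h γ hγ hγ1
    · intro h γ hγ hγ1
      by_cases hlt : dist γ (1 : G) < 3 * dist x 1
      · exact h γ hγ hγ1 hlt
      · push_neg at hlt
        rcases eq_or_lt_of_le (dist_nonneg : (0:ℝ) ≤ dist x 1) with h0 | h0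
        · have hx : x = 1 := dist_le_zero.mp (le_of_eq h0.symm)
          rw [hx, dist_self]
          exact dist_pos.mpr (Ne.symm hγ1)
        · have ht := dist_triangle γ x 1
          have hc : dist γ x = dist x γ := dist_comm γ x
          linarith
  refine ⟨heq, ?_⟩
  -- Discreteness gives a uniform separation radius r
  obtain ⟨V, hV, hV1⟩ : ∃ V : Set G, V ∈ nhds (1 : G) ∧ V ∩ (Γ : Set G) = {1} :=
    nhds_inter_eq_singleton_of_mem_discrete (isDiscrete_iff_discreteTopology.mpr hdisc) Γ.one_mem
  obtain ⟨r, hr0, hrV⟩ := Metric.mem_nhds_iff.mp hV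
  have hsmall : ∀ γ ∈ Γ, dist γ (1 : G) < r → γ = 1 := by
    intro γ hγ hd
    have : γ ∈ V ∩ (Γ : Set G) := ⟨hrV (by simpa [Metric.mem_ball] using hd), hγ⟩
    rw [hV1] at this
    exact this
  have hsep : ∀ γ ∈ Γ, ∀ γ' ∈ Γ, γ ≠ γ' → r ≤ dist γ γ' := by
    intro γ hγ γ' hγ' hne
    by_contra hlt
    push_neg at hlt
    have h1 : dist (γ⁻¹ * γ') (1 : G) < r := by
      have h := hinv γ⁻¹ γ γ'
      rw [inv_mul_cancel] at h
      calc dist (γ⁻¹ * γ') (1 : G) = dist (1 : G) (γ⁻¹ * γ') := dist_comm _ _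
        _ = dist γ γ' := h
        _ < r := hlt
    have h2 : γ⁻¹ * γ' ∈ Γ := Γ.mul_mem (Γ.inv_mem hγ) hγ'
    exact hne (inv_mul_eq_one.mp (hsmall _ h2 h1))
  -- Γ is closed
  have hclosed : IsClosed (Γ : Set G) := by
    rw [← closure_eq_iff_isClosed]
    refine Set.Subset.antisymm ?_ subset_closure
    intro x hx
    obtain ⟨γ, hγ, hγd⟩ := Metric.mem_closure_iff.mp hx (r / 2) (by linarith)
    have hxγ : x = γ := by
      by_contra hne
      have hd : 0 < dist x γ := dist_pos.mpr hne
      obtain ⟨γ', hγ', hγ'd⟩ := Metric.mem_closure_iff.mp hx (min (dist x γ) (r / 2))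
        (lt_min hd (by linarith))
      have hne' : γ ≠ γ' := by
        intro h
        rw [← h] at hγ'd
        exact absurd (lt_min_iff.mp hγ'd).1 (lt_irrefl _)
      have : dist γ γ' ≤ dist x γ + dist x γ' := by
        have := dist_triangle γ x γ'
        have hc := dist_comm γ x
        linarith
      have hlt : dist γ γ' < r := by
        have := (lt_min_iff.mp hγ'd).2
        linarith
      exact absurd hlt (not_lt.mpr (hsep γ hγ γ' hγ' hne'))
    rw [hxγ]
    exact hγ
  -- Γ is a discrete set
  have hdiscS : DiscreteTopology ((Γ : Set G) : Set G) := hdisc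
  -- openness
  rw [Metric.isOpen_iff]
  intro x hx
  simp only [Set.mem_setOf_eq] at hx
  set R : ℝ := dist x 1 with hR
  -- the finitely many relevant γ
  have hfin : Set.Finite (Metric.closedBall (1 : G) (3 * R + 4) ∩ (Γ : Set G)) :=
    Metric.finite_isBounded_inter_isClosed (isDiscrete_iff_discreteTopology.mpr hdisc) Metric.isBounded_closedBall hclosed
  set S : Finset G := hfin.toFinset.filter (fun γ => γ ≠ 1) with hS
  have hSmem : ∀ γ, γ ∈ S ↔ (γ ∈ Γ ∧ dist γ (1 : G) ≤ 3 * R + 4 ∧ γ ≠ 1) := by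
    intro γ
    simp only [hS, Finset.mem_filter, Set.Finite.mem_toFinset, Set.mem_inter_iff,
      Metric.mem_closedBall, SetLike.mem_coe]
    constructor
    · rintro ⟨⟨h1, h2⟩, h3⟩; exact ⟨h2, h1, h3⟩
    · rintro ⟨h1, h2, h3⟩; exact ⟨⟨h2, h1⟩, h3⟩
  set T : Finset ℝ := insert (1 : ℝ) (S.image (fun γ => (dist x γ - R) / 2)) with hT
  have hTne : T.Nonempty := Finset.insert_nonempty _ _
  set ε : ℝ := T.min' hTne with hε
  have hε1 : ε ≤ 1 := Finset.min'_le _ _ (Finset.mem_insert_self _ _)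
  have hεγ : ∀ γ ∈ S, ε ≤ (dist x γ - R) / 2 := by
    intro γ hγ
    exact Finset.min'_le _ _ (Finset.mem_insert_of_mem (Finset.mem_image_of_mem _ hγ))
  have hε0 : 0 < ε := by
    rw [hε]
    rw [Finset.lt_min'_iff]
    intro y hy
    rw [hT] at hy
    rcases Finset.mem_insert.mp hy with h | h
    · rw [h]; norm_num
    · obtain ⟨γ, hγS, hγy⟩ := Finset.mem_image.mp h
      obtain ⟨hγΓ, _, hγ1⟩ := (hSmem γ).mp hγS
      have := hx γ hγΓ hγ1
      rw [← hγy]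
      linarith
  refine ⟨ε, hε0, ?_⟩
  rw [heq]
  intro y hy
  simp only [Set.mem_setOf_eq]
  intro γ hγ hγ1 h3
  rw [Metric.mem_ball] at hy
  have hy1 : dist y 1 ≤ dist y x + dist x 1 := dist_triangle y x 1
  have hγball : dist γ (1 : G) ≤ 3 * R + 4 := by linarith
  have hγS : γ ∈ S := (hSmem γ).mpr ⟨hγ, hγball, hγ1⟩
  have h1 := hεγ γ hγS
  have h2 : dist x γ ≤ dist x y + dist y γ := dist_triangle x y γ
  have h4 : dist x y = dist y x := dist_comm x y
  linarith
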